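/- arXiv:2004.14729 — 2 statements merged into one kernel-verified Lean document; each statement's English description precedes it below -/
import Mathlib

section
/- Let s ≥ 2, L > 0, A(r) = (1+s/2)^{-1} r^{1+s/2}, and let γ̃ : [0,1] → ℝ be a piecewise C¹ curve with γ̃(0) = L/2 and γ̃(1) = x₁ ≤ 0. Then 2A(L/2) − A(|L/2 + x₁|) ≤ ∫₀¹ min(|γ̃(t) − L/2|, |γ̃(t) + L/2|)^{s/2} |γ̃'(t)| dt. -/
open Set

/-- A curve `γ : ℝ → ℝ` is piecewise C¹ on `[0,1]`. -/
def PiecewiseC1R (γ : ℝ → ℝ) : Prop :=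
  ContinuousOn γ (Icc 0 1) ∧
  ∃ (n : ℕ) (t : Fin (n + 1) → ℝ), StrictMono t ∧ t 0 = 0 ∧ t (Fin.last n) = 1 ∧
    ∀ i : Fin n, ContDiffOn ℝ 1 γ (Icc (t i.castSucc) (t i.succ))

open MeasureTheory intervalIntegral

noncomputable section StmtSixAux

/-- The double-well integrand. -/
def Fa (s L y : ℝ) : ℝ := (min |y - L/2| |y + L/2|) ^ (s/2)

lemma Fa_nonneg (s L y : ℝ) : 0 ≤ Fa s L y :=
  Real.rpow_nonneg (le_min (abs_nonneg _) (abs_nonneg _)) _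

lemma Fa_cont {s : ℝ} (hs : 0 < s) (L : ℝ) : Continuous (Fa s L) := by
  apply Continuous.rpow_const
  · exact ((continuous_id.sub continuous_const).abs).min
      ((continuous_id.add continuous_const).abs)
  · intro x; right; positivity

/-- Antiderivative of `Fa`. -/
def Ga (s L y : ℝ) : ℝ := ∫ u in (0:ℝ)..y, Fa s L u

lemma Ga_hasDerivAt {s : ℝ} (hs : 0 < s) (L y : ℝ) :
    HasDerivAt (Ga s L) (Fa s L y) y :=
  intervalIntegral.integral_hasDerivAt_right
    ((Fa_cont hs L).intervalIntegrable _ _)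
    ((Fa_cont hs L).stronglyMeasurableAtFilter _ _)
    (Fa_cont hs L).continuousAt

lemma Ga_cont {s : ℝ} (hs : 0 < s) (L : ℝ) : Continuous (Ga s L) :=
  Differentiable.continuous (fun y => (Ga_hasDerivAt hs L y).differentiableAt)

/-- On a C¹ piece, the drop of `Ga ∘ γ` is bounded by the weighted length;
we also record interval integrability of the weighted speed. -/
lemma piece_bound {s L : ℝ} (hs : 0 < s) {γ : ℝ → ℝ} {a b : ℝ} (hab : a < b)
    (hγ : ContDiffOn ℝ 1 γ (Icc a b)) :
    IntervalIntegrable (fun x => Fa s L (γ x) * |deriv γ x|) volume a b ∧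
    Ga s L (γ a) - Ga s L (γ b) ≤ ∫ x in a..b, Fa s L (γ x) * |deriv γ x| := by
  have hγc : ContinuousOn γ (Icc a b) := hγ.continuousOn
  have hdw : ContinuousOn (derivWithin γ (Icc a b)) (Icc a b) :=
    hγ.continuousOn_derivWithin (uniqueDiffOn_Icc hab) le_rfl
  have key : ∀ x ∈ Ioo a b, HasDerivAt γ (derivWithin γ (Icc a b) x) x := fun x hx =>
    ((hγ.differentiableOn one_ne_zero) x (Ioo_subset_Icc_self hx)).hasDerivWithinAt.hasDerivAt
      (Icc_mem_nhds hx.1 hx.2)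
  have hde : ∀ x ∈ Ioo a b, deriv γ x = derivWithin γ (Icc a b) x := fun x hx =>
    (key x hx).deriv
  set h' : ℝ → ℝ := fun x => Fa s L (γ x) * deriv γ x with hh'
  set hc : ℝ → ℝ := fun x => Fa s L (γ x) * derivWithin γ (Icc a b) x with hhc
  have hccont : ContinuousOn hc (Icc a b) :=
    ((Fa_cont hs L).comp_continuousOn hγc).mul hdw
  have hres : volume.restrict (Ioc a b) = volume.restrict (Ioo a b) :=
    (Measure.restrict_congr_set Ioo_ae_eq_Ioc).symm
  have hcint : IntegrableOn hc (Ioc a b) :=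
    (hccont.integrableOn_Icc).mono_set Ioc_subset_Icc_self
  have haeeq : h' =ᵐ[volume.restrict (Ioc a b)] hc := by
    rw [hres]
    filter_upwards [ae_restrict_mem measurableSet_Ioo] with x hx
    simp only [hh', hhc, hde x hx]
  have h'int : IntervalIntegrable h' volume a b := by
    rw [intervalIntegrable_iff_integrableOn_Ioc_of_le hab.le]
    exact hcint.congr haeeq.symm
  have habs : (fun x => Fa s L (γ x) * |deriv γ x|) = fun x => |h' x| := by
    funext x
    simp only [hh', abs_mul, abs_of_nonneg (Fa_nonneg s L (γ x))]
  have hderivc : ∀ x ∈ Ioo a b, HasDerivWithinAt (fun x => Ga s L (γ x)) (h' x) (Ioi x) x := by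
    intro x hx
    have h1 : HasDerivAt γ (deriv γ x) x := by rw [hde x hx]; exact key x hx
    exact ((Ga_hasDerivAt hs L (γ x)).comp x h1).hasDerivWithinAt
  have hftc : ∫ x in a..b, h' x = Ga s L (γ b) - Ga s L (γ a) :=
    integral_eq_sub_of_hasDeriv_right_of_le hab.le
      ((Ga_cont hs L).comp_continuousOn hγc) hderivc h'int
  refine ⟨by rw [habs]; exact h'int.abs, ?_⟩
  rw [habs]
  have h1 : Ga s L (γ a) - Ga s L (γ b) = -∫ x in a..b, h' x := by rw [hftc]; ring
  have h2 : |∫ x in a..b, h' x| ≤ ∫ x in a..b, |h' x| :=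
    intervalIntegral.abs_integral_le_integral_abs hab.le
  calc Ga s L (γ a) - Ga s L (γ b) = -∫ x in a..b, h' x := h1
    _ ≤ |∫ x in a..b, h' x| := neg_le_abs _
    _ ≤ ∫ x in a..b, |h' x| := h2

/-- Evaluation of `∫ x in x..0, Fa` for `-L/2 ≤ x ≤ 0`. -/
lemma integral_Fa_left {s L x : ℝ} (hs : 2 ≤ s) (hL : 0 < L) (hx1 : -(L/2) ≤ x)
    (hx2 : x ≤ 0) :
    ∫ y in x..(0:ℝ), Fa s L y
      = (L/2) ^ (1 + s/2) / (1 + s/2) - (x + L/2) ^ (1 + s/2) / (1 + s/2) := by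
  have hspos : (0:ℝ) < s := by linarith
  have hq : (1:ℝ) ≤ 1 + s/2 := by linarith
  have hqne : (1 + s/2) ≠ 0 := by positivity
  set q : ℝ := 1 + s/2 with hqdef
  have hderiv : ∀ y ∈ uIcc x (0:ℝ),
      HasDerivAt (fun y => (y + L/2) ^ q / q) ((y + L/2) ^ (s/2)) y := by
    intro y _
    have h1 : HasDerivAt (fun y : ℝ => y + L/2) 1 y := (hasDerivAt_id y).add_const _
    have h2 := (Real.hasDerivAt_rpow_const (p := q) (Or.inr hq)).comp y h1
    have h3 := h2.div_const q
    have hq1 : q - 1 = s/2 := by rw [hqdef]; ring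
    have e : q * (y + L/2) ^ (q - 1) * 1 / q = (y + L/2) ^ (s/2) := by
      rw [hq1]; field_simp
    rw [e] at h3; exact h3
  have hFaeq : EqOn (Fa s L) (fun y => (y + L/2) ^ (s/2)) (uIcc x (0:ℝ)) := by
    intro y hy
    rw [uIcc_of_le hx2] at hy
    have hy1 : x ≤ y := hy.1
    have hy2 : y ≤ 0 := hy.2
    have h1 : |y - L/2| = L/2 - y := by rw [abs_of_nonpos (by linarith)]; ring
    have h2 : |y + L/2| = y + L/2 := abs_of_nonneg (by linarith)
    have h3 : min |y - L/2| |y + L/2| = y + L/2 := by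
      rw [h1, h2, min_eq_right (by linarith)]
    simp only [Fa, h3]
  have hint : IntervalIntegrable (fun y => (y + L/2) ^ (s/2)) volume x 0 := by
    apply ContinuousOn.intervalIntegrable
    intro y hy
    rw [uIcc_of_le hx2] at hy
    apply ContinuousWithinAt.rpow_const
    · exact (continuous_id.add continuous_const).continuousWithinAt
    · right; positivity
  rw [intervalIntegral.integral_congr hFaeq,
    intervalIntegral.integral_eq_sub_of_hasDerivAt hderiv hint]
  norm_num

/-- Evaluation of `Ga` at `L/2`. -/
lemma Ga_at_half {s L : ℝ} (hs : 2 ≤ s) (hL : 0 < L) :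
    Ga s L (L/2) = (L/2) ^ (1 + s/2) / (1 + s/2) := by
  have hspos : (0:ℝ) < s := by linarith
  have hq : (1:ℝ) ≤ 1 + s/2 := by linarith
  have hqne : (1 + s/2) ≠ 0 := by positivity
  set q : ℝ := 1 + s/2 with hqdef
  have hL2 : (0:ℝ) ≤ L/2 := by positivity
  have hderiv : ∀ y ∈ uIcc (0:ℝ) (L/2),
      HasDerivAt (fun y => -((L/2 - y) ^ q / q)) ((L/2 - y) ^ (s/2)) y := by
    intro y _
    have h1 : HasDerivAt (fun y : ℝ => L/2 - y) (-1) y := by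
      simpa using (hasDerivAt_id y).const_sub (L/2)
    have h2 := (Real.hasDerivAt_rpow_const (p := q) (Or.inr hq)).comp y h1
    have h3 := (h2.div_const q).neg
    have hq1 : q - 1 = s/2 := by rw [hqdef]; ring
    have e : -(q * (L/2 - y) ^ (q - 1) * -1 / q) = (L/2 - y) ^ (s/2) := by
      rw [hq1]; field_simp
    rw [e] at h3; exact h3
  have hFaeq : EqOn (Fa s L) (fun y => (L/2 - y) ^ (s/2)) (uIcc (0:ℝ) (L/2)) := by
    intro y hy
    rw [uIcc_of_le hL2] at hy
    have hy1 : 0 ≤ y := hy.1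
    have hy2 : y ≤ L/2 := hy.2
    have h1 : |y - L/2| = L/2 - y := by rw [abs_of_nonpos (by linarith)]; ring
    have h2 : |y + L/2| = y + L/2 := abs_of_nonneg (by linarith)
    have h3 : min |y - L/2| |y + L/2| = L/2 - y := by
      rw [h1, h2, min_eq_left (by linarith)]
    simp only [Fa, h3]
  have hint : IntervalIntegrable (fun y => (L/2 - y) ^ (s/2)) volume 0 (L/2) := by
    apply ContinuousOn.intervalIntegrable
    intro y hy
    apply ContinuousWithinAt.rpow_const
    · exact (continuous_const.sub continuous_id).continuousWithinAt
    · right; positivity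
  have h0 : ((L:ℝ)/2 - L/2) ^ q = 0 := by
    rw [show (L:ℝ)/2 - L/2 = 0 by ring, Real.zero_rpow (by linarith : (0:ℝ) < 1 + s/2).ne']
  rw [Ga, intervalIntegral.integral_congr hFaeq,
    intervalIntegral.integral_eq_sub_of_hasDerivAt hderiv hint]
  rw [h0]
  simp

/-- Upper bound for `Ga` at `x₁ ≤ 0`. -/
lemma Ga_at_left {s L x₁ : ℝ} (hs : 2 ≤ s) (hL : 0 < L) (hx : x₁ ≤ 0) :
    Ga s L x₁ ≤ |L/2 + x₁| ^ (1 + s/2) / (1 + s/2) - (L/2) ^ (1 + s/2) / (1 + s/2) := by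
  have hspos : (0:ℝ) < s := by linarith
  have hqpos : (0:ℝ) < 1 + s/2 := by linarith
  have hGx : Ga s L x₁ = -∫ y in x₁..(0:ℝ), Fa s L y := by
    rw [Ga, intervalIntegral.integral_symm]
  rcases le_or_gt (-(L/2)) x₁ with hcase | hcase
  · rw [hGx, integral_Fa_left hs hL hcase hx]
    have habs : |L/2 + x₁| = x₁ + L/2 := by
      rw [abs_of_nonneg (by linarith)]; ring
    rw [habs]
    linarith
  · -- x₁ < -L/2
    have hsplit : (∫ y in x₁..(-(L/2)), Fa s L y) + (∫ y in (-(L/2))..(0:ℝ), Fa s L y)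
        = ∫ y in x₁..(0:ℝ), Fa s L y :=
      intervalIntegral.integral_add_adjacent_intervals
        ((Fa_cont hspos L).intervalIntegrable _ _)
        ((Fa_cont hspos L).intervalIntegrable _ _)
    have h1 : ∫ y in (-(L/2))..(0:ℝ), Fa s L y = (L/2) ^ (1 + s/2) / (1 + s/2) := by
      rw [integral_Fa_left hs hL le_rfl (by linarith)]
      rw [show -(L/2) + L/2 = (0:ℝ) by ring, Real.zero_rpow (by linarith : (0:ℝ) < 1 + s/2).ne']
      simp
    have h2 : 0 ≤ ∫ y in x₁..(-(L/2)), Fa s L y :=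
      intervalIntegral.integral_nonneg hcase.le (fun u _ => Fa_nonneg s L u)
    have h3 : (0:ℝ) ≤ |L/2 + x₁| ^ (1 + s/2) / (1 + s/2) := by
      apply div_nonneg (Real.rpow_nonneg (abs_nonneg _) _) hqpos.le
    rw [hGx, ← hsplit, h1]
    linarith

end StmtSixAux

/-- For a piecewise C¹ curve from `L/2` to `x₁ ≤ 0`,
`2A(L/2) − A(|L/2 + x₁|) ≤ ∫₀¹ min(|γ̃(t) − L/2|, |γ̃(t) + L/2|)^{s/2} |γ̃'(t)| dt`,
with `A(r) = r^{1+s/2}/(1+s/2)`. -/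
theorem stmt_6 (s L x₁ : ℝ) (hs : 2 ≤ s) (hL : 0 < L) (hx : x₁ ≤ 0)
    (γ : ℝ → ℝ) (hγ : PiecewiseC1R γ) (h0 : γ 0 = L / 2) (h1 : γ 1 = x₁) :
    2 * ((L / 2) ^ (1 + s / 2) / (1 + s / 2)) - |L / 2 + x₁| ^ (1 + s / 2) / (1 + s / 2) ≤
      ∫ t in (0:ℝ)..1, (min |γ t - L / 2| |γ t + L / 2|) ^ (s / 2) * |deriv γ t| := by
  have hspos : (0:ℝ) < s := by linarith
  obtain ⟨hcont, n, t, hmono, ht0, htn, hpiece⟩ := hγ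
  -- reindex the partition over ℕ
  set u : ℕ → ℝ := fun i => t ⟨min i n, Nat.lt_succ_of_le (min_le_right _ _)⟩ with hu
  have hu0 : u 0 = 0 := by
    have : (⟨min 0 n, Nat.lt_succ_of_le (min_le_right _ _)⟩ : Fin (n+1)) = 0 := by
      ext; simp
    rw [hu]; simp only [this]; exact ht0
  have hun : u n = 1 := by
    have : (⟨min n n, Nat.lt_succ_of_le (min_le_right _ _)⟩ : Fin (n+1)) = Fin.last n := by
      ext; simp [Fin.last]
    rw [hu]; simp only [this]; exact htn
  set f : ℝ → ℝ := fun x => Fa s L (γ x) * |deriv γ x| with hf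
  have hpb : ∀ k < n, IntervalIntegrable f volume (u k) (u (k+1)) ∧
      Ga s L (γ (u k)) - Ga s L (γ (u (k+1))) ≤ ∫ x in (u k)..(u (k+1)), f x := by
    intro k hk
    have hklt : k < n + 1 := Nat.lt_succ_of_lt hk
    have heq1 : (⟨min k n, Nat.lt_succ_of_le (min_le_right _ _)⟩ : Fin (n+1))
        = (⟨k, hk⟩ : Fin n).castSucc := by
      ext; simp [Nat.min_eq_left hk.le]
    have heq2 : (⟨min (k+1) n, Nat.lt_succ_of_le (min_le_right _ _)⟩ : Fin (n+1))
        = (⟨k, hk⟩ : Fin n).succ := by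
      ext; simp [Nat.min_eq_left (Nat.succ_le_of_lt hk)]
    have hab : u k < u (k+1) := by
      rw [hu]; simp only [heq1, heq2]
      exact hmono Fin.castSucc_lt_succ
    have hcd : ContDiffOn ℝ 1 γ (Icc (u k) (u (k+1))) := by
      rw [hu]; simp only [heq1, heq2]; exact hpiece ⟨k, hk⟩
    exact piece_bound hspos hab hcd
  have hint : ∀ k < n, IntervalIntegrable f volume (u k) (u (k+1)) := fun k hk => (hpb k hk).1
  have hsum : ∑ k ∈ Finset.range n, ∫ x in (u k)..(u (k+1)), f x = ∫ x in (0:ℝ)..1, f x := by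
    rw [intervalIntegral.sum_integral_adjacent_intervals hint, hu0, hun]
  have htel : Ga s L (γ 0) - Ga s L (γ 1)
      = ∑ k ∈ Finset.range n, (Ga s L (γ (u k)) - Ga s L (γ (u (k+1)))) := by
    rw [Finset.sum_range_sub' (fun k => Ga s L (γ (u k))) n, hu0, hun]
  have hmain : Ga s L (γ 0) - Ga s L (γ 1) ≤ ∫ x in (0:ℝ)..1, f x := by
    rw [htel, ← hsum]
    exact Finset.sum_le_sum fun k hk => (hpb k (Finset.mem_range.1 hk)).2
  have hGhalf := Ga_at_half (L := L) hs hL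
  have hGleft := Ga_at_left (L := L) (x₁ := x₁) hs hL hx
  rw [h0, h1] at hmain
  have hfinal : 2 * ((L / 2) ^ (1 + s / 2) / (1 + s / 2))
      - |L / 2 + x₁| ^ (1 + s / 2) / (1 + s / 2) ≤ ∫ x in (0:ℝ)..1, f x := by
    calc 2 * ((L / 2) ^ (1 + s / 2) / (1 + s / 2))
        - |L / 2 + x₁| ^ (1 + s / 2) / (1 + s / 2)
        ≤ Ga s L (L/2) - Ga s L x₁ := by rw [hGhalf]; linarith
      _ ≤ ∫ x in (0:ℝ)..1, f x := hmain
  exact hfinal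
end

section
/- Let f(x) = e^{−(1+s/2)^{-1}|x−a|^{1+s/2}} |x−a|^{−β} on ℝ^d for x ≠ a. Then for x ≠ a, Δf(x) = [ |x−a|^s + (2β − s/2 − d + 1)|x−a|^{s/2 − 1} + (β² + 2β − dβ)|x−a|^{−2} ] f(x). -/
/-- The Laplacian of `f : ℝ^d → ℝ`, as the sum of second partial derivatives along the
coordinate directions. -/
noncomputable def lapl {d : ℕ} (f : EuclideanSpace ℝ (Fin d) → ℝ)
    (x : EuclideanSpace ℝ (Fin d)) : ℝ :=
  ∑ i : Fin d, fderiv ℝ (fun y => fderiv ℝ f y (EuclideanSpace.single i 1)) x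
      (EuclideanSpace.single i 1)

/-- For `f(x) = e^{−(1+s/2)⁻¹|x−a|^{1+s/2}} |x−a|^{−β}` and `x ≠ a`,
`Δf(x) = [ |x−a|^s + (2β − s/2 − d + 1)|x−a|^{s/2−1} + (β² + 2β − dβ)|x−a|^{−2} ] f(x)`. -/
theorem stmt_7 {d : ℕ} (hd : 1 ≤ d) (s β : ℝ) (hs : 2 ≤ s)
    (a x : EuclideanSpace ℝ (Fin d)) (hx : x ≠ a) :
    lapl (fun y => Real.exp (-(1 + s / 2)⁻¹ * ‖y - a‖ ^ (1 + s / 2)) * ‖y - a‖ ^ (-β)) x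
      = (‖x - a‖ ^ s + (2 * β - s / 2 - (d : ℝ) + 1) * ‖x - a‖ ^ (s / 2 - 1)
          + (β ^ 2 + 2 * β - (d : ℝ) * β) * ‖x - a‖ ^ (-2 : ℝ))
        * (Real.exp (-(1 + s / 2)⁻¹ * ‖x - a‖ ^ (1 + s / 2)) * ‖x - a‖ ^ (-β)) := by
  classical
  have hs1 : (0:ℝ) < 1 + s / 2 := by linarith
  set c : ℝ := (1 + s / 2)⁻¹ with hc
  set p : ℝ := (1 + s / 2) / 2 with hp
  set q : ℝ := -β / 2 with hq
  set f : EuclideanSpace ℝ (Fin d) → ℝ :=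
    fun y => Real.exp (-c * ‖y - a‖ ^ (1 + s / 2)) * ‖y - a‖ ^ (-β) with hf
  set u : EuclideanSpace ℝ (Fin d) → ℝ := fun z => ∑ i, (z i - a i) ^ 2 with hu
  have hu_norm : ∀ y : EuclideanSpace ℝ (Fin d), u y = ‖y - a‖ ^ 2 := by
    intro y
    rw [hu, EuclideanSpace.norm_eq, Real.sq_sqrt (by positivity)]
    simp [Real.norm_eq_abs, sq_abs]
  set U : EuclideanSpace ℝ (Fin d) → (EuclideanSpace ℝ (Fin d) →L[ℝ] ℝ) :=
    fun y => ∑ i : Fin d, (2 * (y i - a i)) •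
      (EuclideanSpace.proj i : EuclideanSpace ℝ (Fin d) →L[ℝ] ℝ) with hUdef
  have hU : ∀ y, HasFDerivAt u (U y) y := by
    intro y
    apply HasFDerivAt.fun_sum
    intro i _
    have h : HasFDerivAt (fun z : EuclideanSpace ℝ (Fin d) => z i - a i)
        (EuclideanSpace.proj i : EuclideanSpace ℝ (Fin d) →L[ℝ] ℝ) y := by
      simpa [PiLp.proj_apply] using
        ((EuclideanSpace.proj (𝕜 := ℝ) i).hasFDerivAt (x := y)).sub_const (a i)
    have h2 := h.mul h
    simp only [pow_two]
    rw [two_mul, add_smul]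
    exact h2
  have hUapp : ∀ y (i : Fin d), U y (EuclideanSpace.single i 1) = 2 * (y i - a i) := by
    intro y i
    rw [hUdef]
    simp [ContinuousLinearMap.sum_apply, PiLp.proj_apply, EuclideanSpace.single_apply]
  set F : ℝ → ℝ := fun t => Real.exp (-c * t ^ p) * t ^ q with hF
  set F₁ : ℝ → ℝ := fun t =>
    Real.exp (-c * t ^ p) * ((-c * (p * t ^ (p-1))) * t ^ q + q * t ^ (q-1)) with hF₁
  set F₂ : ℝ → ℝ := fun t =>
    Real.exp (-c * t ^ p) * (-c * (p * t ^ (p-1)))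
        * ((-c * (p * t ^ (p-1))) * t ^ q + q * t ^ (q-1))
      + Real.exp (-c * t ^ p) *
          ((-c * (p * ((p-1) * t ^ (p-1-1)))) * t ^ q
            + (-c * (p * t ^ (p-1))) * (q * t ^ (q-1))
            + q * ((q-1) * t ^ (q-1-1))) with hF₂
  have hDerF : ∀ t : ℝ, 0 < t → HasDerivAt F (F₁ t) t := by
    intro t ht
    have h1 : HasDerivAt (fun t : ℝ => -c * t ^ p) (-c * (p * t ^ (p-1))) t :=
      (Real.hasDerivAt_rpow_const (Or.inl ht.ne')).const_mul _
    have h3 : HasDerivAt (fun t : ℝ => t ^ q) (q * t ^ (q-1)) t :=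
      Real.hasDerivAt_rpow_const (Or.inl ht.ne')
    have := h1.exp.fun_mul h3
    refine this.congr_deriv ?_
    ring
  have hDerF₁ : ∀ t : ℝ, 0 < t → HasDerivAt F₁ (F₂ t) t := by
    intro t ht
    have hr : ∀ e : ℝ, HasDerivAt (fun t : ℝ => t ^ e) (e * t ^ (e-1)) t := fun e =>
      Real.hasDerivAt_rpow_const (Or.inl ht.ne')
    have h1 : HasDerivAt (fun t : ℝ => -c * t ^ p) (-c * (p * t ^ (p-1))) t :=
      (hr p).const_mul _
    have hA : HasDerivAt (fun t : ℝ => (-c * (p * t ^ (p-1))) * t ^ q + q * t ^ (q-1))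
        ((-c * (p * ((p-1) * t ^ (p-1-1)))) * t ^ q + (-c * (p * t ^ (p-1))) * (q * t ^ (q-1))
          + q * ((q-1) * t ^ (q-1-1))) t := by
      have hB : HasDerivAt (fun t : ℝ => (-c * (p * t ^ (p-1))) * t ^ q)
          ((-c * (p * ((p-1) * t ^ (p-1-1)))) * t ^ q
            + (-c * (p * t ^ (p-1))) * (q * t ^ (q-1))) t := by
        have := (((hr (p-1)).const_mul p).const_mul (-c)).fun_mul (hr q)
        convert this using 1
      exact hB.add ((hr (q-1)).const_mul q)
    exact h1.exp.mul hA
  -- f = F ∘ u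
  have hfF : f = F ∘ u := by
    funext y
    have hnn : (0:ℝ) ≤ ‖y - a‖ := norm_nonneg _
    have hb : ∀ e : ℝ, (‖y - a‖ ^ 2 : ℝ) ^ e = ‖y - a‖ ^ (2 * e) := by
      intro e
      rw [← Real.rpow_natCast ‖y - a‖ 2, ← Real.rpow_mul hnn]
      norm_num
    simp only [hf, hF, Function.comp_apply, hu_norm y, hb]
    rw [show 2 * p = 1 + s / 2 by rw [hp]; ring, show 2 * q = -β by rw [hq]; ring]
  have hr0 : (0:ℝ) < ‖x - a‖ := by
    rw [norm_pos_iff, sub_ne_zero]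
    exact hx
  set r : ℝ := ‖x - a‖ with hrdef
  have hux : u x = r ^ 2 := hu_norm x
  have huxpos : 0 < u x := by rw [hux]; positivity
  -- eventual positivity / nonequality
  have hne : ∀ᶠ y in nhds x, y ≠ a := eventually_ne_nhds hx
  have hupos : ∀ y : EuclideanSpace ℝ (Fin d), y ≠ a → 0 < u y := by
    intro y hy
    rw [hu_norm y]
    have : (0:ℝ) < ‖y - a‖ := by rw [norm_pos_iff, sub_ne_zero]; exact hy
    positivity
  have hfd : ∀ y : EuclideanSpace ℝ (Fin d), y ≠ a →
      HasFDerivAt f ((F₁ (u y)) • U y) y := by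
    intro y hy
    rw [hfF]
    exact (hDerF (u y) (hupos y hy)).comp_hasFDerivAt y (hU y)
  -- inner derivative functions
  have hinner : ∀ i : Fin d,
      (fun y => fderiv ℝ f y (EuclideanSpace.single i 1)) =ᶠ[nhds x]
        (fun y => F₁ (u y) * (2 * (y i - a i))) := by
    intro i
    filter_upwards [hne] with y hy
    rw [(hfd y hy).fderiv]
    simp [hUapp y i]
  have houter : ∀ i : Fin d,
      HasFDerivAt (fun y => F₁ (u y) * (2 * (y i - a i)))
        ((F₁ (u x)) • ((2:ℝ) • (EuclideanSpace.proj i : EuclideanSpace ℝ (Fin d) →L[ℝ] ℝ))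
          + (2 * (x i - a i)) • ((F₂ (u x)) • U x)) x := by
    intro i
    have h1 : HasFDerivAt (fun y => F₁ (u y)) ((F₂ (u x)) • U x) x :=
      (hDerF₁ (u x) huxpos).comp_hasFDerivAt x (hU x)
    have h2 : HasFDerivAt (fun y : EuclideanSpace ℝ (Fin d) => 2 * (y i - a i))
        ((2:ℝ) • (EuclideanSpace.proj i : EuclideanSpace ℝ (Fin d) →L[ℝ] ℝ)) x := by
      have h : HasFDerivAt (fun z : EuclideanSpace ℝ (Fin d) => z i - a i)
          (EuclideanSpace.proj i : EuclideanSpace ℝ (Fin d) →L[ℝ] ℝ) x := by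
        simpa [PiLp.proj_apply] using
          ((EuclideanSpace.proj (𝕜 := ℝ) i).hasFDerivAt (x := x)).sub_const (a i)
      exact h.const_mul 2
    exact h1.mul h2
  have hterm : ∀ i : Fin d,
      fderiv ℝ (fun y => fderiv ℝ f y (EuclideanSpace.single i 1)) x
          (EuclideanSpace.single i 1)
        = F₁ (u x) * 2 + 2 * (x i - a i) * (F₂ (u x) * (2 * (x i - a i))) := by
    intro i
    rw [(hinner i).fderiv_eq, (houter i).fderiv]
    simp [hUapp x i, EuclideanSpace.single_apply]
  have hlapl : lapl f x = 2 * (d:ℝ) * F₁ (u x) + 4 * F₂ (u x) * u x := by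
    rw [lapl]
    rw [Finset.sum_congr rfl (fun i _ => hterm i)]
    rw [Finset.sum_add_distrib, Finset.sum_const]
    simp only [Finset.card_univ, Fintype.card_fin, nsmul_eq_mul]
    have hsum : ∑ i : Fin d, 2 * (x i - a i) * (F₂ (u x) * (2 * (x i - a i)))
        = 4 * F₂ (u x) * u x := by
      simp only [hu]
      rw [Finset.mul_sum]
      exact Finset.sum_congr rfl fun i _ => by ring
    rw [hsum]
    ring
  rw [hlapl, hux]
  simp only [hF₁, hF₂]
  have hb : ∀ e : ℝ, (r ^ 2 : ℝ) ^ e = r ^ (2 * e) := by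
    intro e
    rw [← Real.rpow_natCast r 2, ← Real.rpow_mul hr0.le]
    norm_num
  set X : ℝ := r ^ (s / 2 : ℝ) with hX
  set Z : ℝ := r ^ (-β) with hZ
  have e1 : (r ^ 2 : ℝ) ^ p = X * r := by
    rw [hb, show 2 * p = s / 2 + 1 by rw [hp]; ring, Real.rpow_add hr0, Real.rpow_one]
  have e2 : (r ^ 2 : ℝ) ^ (p - 1) = X * r⁻¹ := by
    rw [hb, show 2 * (p - 1) = s / 2 + (-1) by rw [hp]; ring, Real.rpow_add hr0,
      Real.rpow_neg_one]
  have e3 : (r ^ 2 : ℝ) ^ (p - 1 - 1) = X * r⁻¹ * r⁻¹ * r⁻¹ := by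
    rw [hb, show 2 * (p - 1 - 1) = s / 2 + (-1) + (-1) + (-1) by rw [hp]; ring,
      Real.rpow_add hr0, Real.rpow_add hr0, Real.rpow_add hr0, Real.rpow_neg_one]
  have e4 : (r ^ 2 : ℝ) ^ q = Z := by
    rw [hb, show 2 * q = -β by rw [hq]; ring]
  have e5 : (r ^ 2 : ℝ) ^ (q - 1) = Z * r⁻¹ * r⁻¹ := by
    rw [hb, show 2 * (q - 1) = -β + (-1) + (-1) by rw [hq]; ring,
      Real.rpow_add hr0, Real.rpow_add hr0, Real.rpow_neg_one]
  have e6 : (r ^ 2 : ℝ) ^ (q - 1 - 1) = Z * r⁻¹ * r⁻¹ * r⁻¹ * r⁻¹ := by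
    rw [hb, show 2 * (q - 1 - 1) = -β + (-1) + (-1) + (-1) + (-1) by rw [hq]; ring,
      Real.rpow_add hr0, Real.rpow_add hr0, Real.rpow_add hr0, Real.rpow_add hr0,
      Real.rpow_neg_one]
  have e7 : r ^ s = X * X := by
    rw [show s = s / 2 + s / 2 by ring, Real.rpow_add hr0]
  have e8 : r ^ (s / 2 - 1) = X * r⁻¹ := by
    rw [show s / 2 - 1 = s / 2 + (-1) by ring, Real.rpow_add hr0, Real.rpow_neg_one]
  have e9 : r ^ (-2 : ℝ) = r⁻¹ * r⁻¹ := by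
    rw [show (-2 : ℝ) = -1 + -1 by ring, Real.rpow_add hr0, Real.rpow_neg_one]
  have e10 : r ^ (1 + s / 2) = X * r := by
    rw [show 1 + s / 2 = s / 2 + 1 by ring, Real.rpow_add hr0, Real.rpow_one]
  rw [e1, e2, e3, e4, e5, e6, e7, e8, e9, e10]
  rw [hp, hq, hc]
  have h1 : (1 + s / 2 : ℝ) ≠ 0 := hs1.ne'
  field_simp
  ring
end
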